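/- Let (A; ∧, d) be a regular SMB algebra over ~ and let a,b,c,e ∈ A. Then (c,e) ∈ Cg(a,b) ∨ ~ if and only if (c, e∧c) ∈ Cg(a,b) and (e, c∧e) ∈ Cg(a,b). -/

import Mathlib

/-- An equivalence relation on `A` compatible with the binary operation `m`
and the ternary operation `d`, i.e. a congruence of the algebra `(A; m, d)`. -/
structure IsCongruence {A : Type*} (m : A → A → A) (d : A → A → A → A)
    (θ : A → A → Prop) : Prop where
  equiv : Equivalence θ
  compat_m : ∀ {a a' b b'}, θ a a' → θ b b' → θ (m a b) (m a' b')
  compat_d : ∀ {a a' b b' c c'}, θ a a' → θ b b' → θ c c' → θ (d a b c) (d a' b' c')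

/-- `(A; m, d)` is an SMB algebra over the congruence `r`. -/
structure IsSMB {A : Type*} (m : A → A → A) (d : A → A → A → A)
    (r : A → A → Prop) : Prop where
  cong : IsCongruence m d r
  idem_m : ∀ x, m x x = x
  idem_d : ∀ x, d x x x = x
  comm : ∀ x y, r (m x y) (m y x)
  assoc : ∀ x y z, r (m (m x y) z) (m x (m y z))
  proj : ∀ a b, r a b → m a b = b
  mal_left : ∀ a b, r a b → d a b b = a
  mal_right : ∀ a b, r a b → d b b a = a

/-- `(A; m, d)` is a regular SMB algebra over the congruence `r`. -/
structure IsRegularSMB {A : Type*} (m : A → A → A) (d : A → A → A → A)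
    (r : A → A → Prop) : Prop where
  smb : IsSMB m d r
  reg1 : ∀ a b c, r (d a b c) (m (m a b) c)
  reg2 : ∀ a b, r (m a b) b → m a b = b
  reg3 : ∀ x y z, d x y z = d (m (m y z) x) (m (m x z) y) (m (m x y) z)
  reg4 : ∀ x y, m (m x y) y = m x y

/-- The principal congruence generated by the pair `(a, b)`: the smallest
congruence of `(A; m, d)` containing `(a, b)`. -/
def Cg {A : Type*} (m : A → A → A) (d : A → A → A → A) (a b : A) : A → A → Prop :=
  fun x y => ∀ θ : A → A → Prop, IsCongruence m d θ → θ a b → θ x y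

/-- The join of two congruences: the smallest congruence of `(A; m, d)`
containing both `ρ` and `σ`. -/
def congJoin {A : Type*} (m : A → A → A) (d : A → A → A → A)
    (ρ σ : A → A → Prop) : A → A → Prop :=
  fun x y => ∀ θ : A → A → Prop, IsCongruence m d θ →
    (∀ u v, ρ u v → θ u v) → (∀ u v, σ u v → θ u v) → θ x y

section Aux

variable {A : Type*} {m : A → A → A} {d : A → A → A → A} {r : A → A → Prop}

/-- `Cg m d a b` is a congruence. -/
theorem cg_isCongruence (m : A → A → A) (d : A → A → A → A) (a b : A) :
    IsCongruence m d (Cg m d a b) where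
  equiv := ⟨fun x θ hθ _ => hθ.equiv.refl x,
    fun h θ hθ hab => hθ.equiv.symm (h θ hθ hab),
    fun h1 h2 θ hθ hab => hθ.equiv.trans (h1 θ hθ hab) (h2 θ hθ hab)⟩
  compat_m := fun h1 h2 θ hθ hab => hθ.compat_m (h1 θ hθ hab) (h2 θ hθ hab)
  compat_d := fun h1 h2 h3 θ hθ hab =>
    hθ.compat_d (h1 θ hθ hab) (h2 θ hθ hab) (h3 θ hθ hab)

/-- The key step: the relation `σ x y := θ x (m y x) ∧ θ y (m x y)` is closed under
composing with an `r`-step on the right. -/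
theorem key_step (h : IsRegularSMB m d r) {θ : A → A → Prop}
    (hθ : IsCongruence m d θ) {c e f : A}
    (H1 : θ c (m e c)) (H2 : θ e (m c e)) (hef : r e f) :
    θ c (m f c) ∧ θ f (m c f) := by
  have rr := h.smb.cong.equiv
  have hfe : r f e := rr.symm hef
  -- First: θ (m f c) (m e c)
  have rfc_ec : r (m f c) (m e c) := h.smb.cong.compat_m hfe (rr.refl c)
  have rA : r (m (m f c) (m e c)) (m e c) := by
    have := h.smb.cong.compat_m rfc_ec (rr.refl (m e c))
    rwa [h.smb.idem_m] at this
  have eA : m (m f c) (m e c) = m e c := h.reg2 _ _ rA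
  have hk : θ (m f c) (m e c) := by
    have := hθ.compat_m (hθ.equiv.refl (m f c)) H1
    rwa [h.reg4 f c, eA] at this
  have G1 : θ c (m f c) := hθ.equiv.trans H1 (hθ.equiv.symm hk)
  -- Second goal
  have hef_eq : m e f = f := h.smb.proj e f hef
  have hB : θ f (m (m c e) f) := by
    have := hθ.compat_m H2 (hθ.equiv.refl f)
    rwa [hef_eq] at this
  have rY : r (m f c) (m (m c e) f) := by
    have h1 : r (m f c) (m c f) := h.smb.comm f c
    have h2 : r (m c e) (m c f) := h.smb.cong.compat_m (rr.refl c) hef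
    have h3 : r (m (m c e) f) (m (m c f) f) := h.smb.cong.compat_m h2 (rr.refl f)
    rw [h.reg4 c f] at h3
    exact rr.trans h1 (rr.symm h3)
  have rB : r (m (m f c) (m (m c e) f)) (m (m c e) f) := by
    have := h.smb.cong.compat_m rY (rr.refl (m (m c e) f))
    rwa [h.smb.idem_m] at this
  have eB : m (m f c) (m (m c e) f) = m (m c e) f := h.reg2 _ _ rB
  have h2' : θ (m (m f c) f) (m (m c e) f) := by
    have := hθ.compat_m (hθ.equiv.refl (m f c)) hB
    rwa [eB] at this
  have h3' : θ (m (m f c) f) (m (m e c) f) := hθ.compat_m hk (hθ.equiv.refl f)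
  have h4' : θ (m c f) (m (m e c) f) := hθ.compat_m H1 (hθ.equiv.refl f)
  have G2 : θ f (m c f) :=
    hθ.equiv.trans hB (hθ.equiv.trans (hθ.equiv.symm h2')
      (hθ.equiv.trans h3' (hθ.equiv.symm h4')))
  exact ⟨G1, G2⟩

/-- The reflexive transitive closure of the union of two congruences is a
congruence. -/
theorem rtg_isCongruence {θ : A → A → Prop} (hθ : IsCongruence m d θ)
    (hr : IsCongruence m d r) :
    IsCongruence m d (Relation.ReflTransGen (fun x y => θ x y ∨ r x y)) := by
  set s : A → A → Prop := fun x y => θ x y ∨ r x y with hs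
  have hssymm : Symmetric s := by
    rintro x y (h | h)
    · exact Or.inl (hθ.equiv.symm h)
    · exact Or.inr (hr.equiv.symm h)
  have mono1 : ∀ {x x'} (y : A), Relation.ReflTransGen s x x' →
      Relation.ReflTransGen s (m x y) (m x' y) := by
    intro x x' y hxx'
    induction hxx' with
    | refl => exact Relation.ReflTransGen.refl
    | tail _ hstep ih =>
        refine ih.tail ?_
        rcases hstep with h | h
        · exact Or.inl (hθ.compat_m h (hθ.equiv.refl y))
        · exact Or.inr (hr.compat_m h (hr.equiv.refl y))
  have mono2 : ∀ (x : A) {y y'}, Relation.ReflTransGen s y y' →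
      Relation.ReflTransGen s (m x y) (m x y') := by
    intro x y y' hyy'
    induction hyy' with
    | refl => exact Relation.ReflTransGen.refl
    | tail _ hstep ih =>
        refine ih.tail ?_
        rcases hstep with h | h
        · exact Or.inl (hθ.compat_m (hθ.equiv.refl x) h)
        · exact Or.inr (hr.compat_m (hr.equiv.refl x) h)
  have dmono1 : ∀ {x x'} (y z : A), Relation.ReflTransGen s x x' →
      Relation.ReflTransGen s (d x y z) (d x' y z) := by
    intro x x' y z hxx'
    induction hxx' with
    | refl => exact Relation.ReflTransGen.refl
    | tail _ hstep ih =>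
        refine ih.tail ?_
        rcases hstep with h | h
        · exact Or.inl (hθ.compat_d h (hθ.equiv.refl y) (hθ.equiv.refl z))
        · exact Or.inr (hr.compat_d h (hr.equiv.refl y) (hr.equiv.refl z))
  have dmono2 : ∀ (x : A) {y y'} (z : A), Relation.ReflTransGen s y y' →
      Relation.ReflTransGen s (d x y z) (d x y' z) := by
    intro x y y' z hyy'
    induction hyy' with
    | refl => exact Relation.ReflTransGen.refl
    | tail _ hstep ih =>
        refine ih.tail ?_
        rcases hstep with h | h
        · exact Or.inl (hθ.compat_d (hθ.equiv.refl x) h (hθ.equiv.refl z))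
        · exact Or.inr (hr.compat_d (hr.equiv.refl x) h (hr.equiv.refl z))
  have dmono3 : ∀ (x y : A) {z z'}, Relation.ReflTransGen s z z' →
      Relation.ReflTransGen s (d x y z) (d x y z') := by
    intro x y z z' hzz'
    induction hzz' with
    | refl => exact Relation.ReflTransGen.refl
    | tail _ hstep ih =>
        refine ih.tail ?_
        rcases hstep with h | h
        · exact Or.inl (hθ.compat_d (hθ.equiv.refl x) (hθ.equiv.refl y) h)
        · exact Or.inr (hr.compat_d (hr.equiv.refl x) (hr.equiv.refl y) h)
  refine ⟨⟨fun x => Relation.ReflTransGen.refl, ?_, fun h1 h2 => h1.trans h2⟩, ?_, ?_⟩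
  · intro x y hxy
    haveI : Std.Symm s := ⟨fun a b hab => hssymm hab⟩
    exact Std.Symm.symm _ _ hxy
  · intro x x' y y' h1 h2
    exact (mono1 y h1).trans (mono2 x' h2)
  · intro x x' y y' z z' h1 h2 h3
    exact ((dmono1 y z h1).trans (dmono2 x' z h2)).trans (dmono3 x' y' h3)

end Aux

/-- In a regular SMB algebra, `(c,e) ∈ Cg(a,b) ∨ ~` iff
`(c, e∧c) ∈ Cg(a,b)` and `(e, c∧e) ∈ Cg(a,b)`. -/
theorem regular_smb_cg_join_characterization {A : Type*} (m : A → A → A)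
    (d : A → A → A → A) (r : A → A → Prop) (h : IsRegularSMB m d r)
    (a b c e : A) :
    congJoin m d (Cg m d a b) r c e ↔
      (Cg m d a b c (m e c) ∧ Cg m d a b e (m c e)) := by
  set θ : A → A → Prop := Cg m d a b with hθdef
  have hθ : IsCongruence m d θ := cg_isCongruence m d a b
  have hr : IsCongruence m d r := h.smb.cong
  constructor
  · intro hJoin
    set s : A → A → Prop := fun x y => θ x y ∨ r x y with hs
    have hJcong : IsCongruence m d (Relation.ReflTransGen s) :=
      rtg_isCongruence hθ hr
    have hJ : Relation.ReflTransGen s c e :=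
      hJoin (Relation.ReflTransGen s) hJcong
        (fun u v huv => Relation.ReflTransGen.single (Or.inl huv))
        (fun u v huv => Relation.ReflTransGen.single (Or.inr huv))
    -- induct along the chain
    have base : θ c (m c c) ∧ θ c (m c c) := by
      rw [h.smb.idem_m]
      exact ⟨hθ.equiv.refl c, hθ.equiv.refl c⟩
    clear hJoin
    induction hJ with
    | refl => exact base
    | tail hcy hstep ih =>
        rename_i y z
        obtain ⟨Hc, Hy⟩ := ih
        rcases hstep with hyz | hyz
        · constructor
          · exact hθ.equiv.trans Hc (hθ.compat_m hyz (hθ.equiv.refl c))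
          · exact hθ.equiv.trans (hθ.equiv.symm hyz)
              (hθ.equiv.trans Hy (hθ.compat_m (hθ.equiv.refl c) hyz))
        · exact key_step h hθ Hc Hy hyz
  · rintro ⟨H1, H2⟩
    intro Θ hΘ hsubθ hsubr
    have t1 : Θ c (m e c) := hsubθ _ _ H1
    have t2 : Θ (m e c) (m c e) := hsubr _ _ (h.smb.comm e c)
    have t3 : Θ (m c e) e := hΘ.equiv.symm (hsubθ _ _ H2)
    exact hΘ.equiv.trans t1 (hΘ.equiv.trans t2 t3)
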